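/- Let ≤ be the well-order on nonzero integers transported from ℕ via μ(−n)=2n, μ(p)=2p−1. For strictly increasing (in this order) tuples (i₁,...,i_p) and (j₁,...,j_p) of nonzero integers all distinct from p+1, the tuple (i₁,...,i_p) precedes (j₁,...,j_p) lexicographically if and only if the tuple obtained by inserting p+1 into each at its correct position (preserving the order) satisfies the same lexicographic comparison. -/
import Mathlib


/-- The map `μ` on nonzero integers: `μ(-n) = 2n`, `μ(p) = 2p - 1` for positive `n, p`. -/
def muMap (z : ℤ) : ℤ := if 0 < z then 2 * z - 1 else -(2 * z)

/-- The well-order on nonzero integers transported from ℕ via `μ`. -/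
def muLT (a b : ℤ) : Prop := muMap a < muMap b

/-- A tuple of (nonzero) integers is strictly increasing in the `μ`-order. -/
def MuStrictIncr {p : ℕ} (f : Fin p → ℤ) : Prop :=
  ∀ a b : Fin p, a < b → muLT (f a) (f b)

/-- Lexicographic comparison (reading from the left) of tuples, using the `μ`-order. -/
def MuLexLT {p : ℕ} (f g : Fin p → ℤ) : Prop :=
  ∃ K : Fin p, (∀ l : Fin p, l < K → f l = g l) ∧ muLT (f K) (g K)

lemma muMap_injective : Function.Injective muMap := by
  intro a b h
  unfold muMap at h
  split_ifs at h <;> omega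

/-- Lexicographic comparison of plain integer tuples. -/
def ZLexLT {n : ℕ} (f g : Fin n → ℤ) : Prop :=
  ∃ K : Fin n, (∀ l : Fin n, l < K → f l = g l) ∧ f K < g K

/-- Symmetric difference of the ranges of two tuples. -/
def sdR {n : ℕ} (f g : Fin n → ℤ) : Set ℤ :=
  (Set.range f \ Set.range g) ∪ (Set.range g \ Set.range f)

/-- For strictly monotone tuples, lexicographic comparison is equivalent to:
the minimum of the symmetric difference of ranges exists and lies in `range f`. -/
lemma zlex_iff_min {n : ℕ} {f g : Fin n → ℤ} (hf : StrictMono f) (hg : StrictMono g) :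
    ZLexLT f g ↔ ∃ m : ℤ, m ∈ sdR f g ∧ (∀ x ∈ sdR f g, m ≤ x) ∧ m ∈ Set.range f := by
  constructor
  · rintro ⟨K, hlt, hK⟩
    have hnotg : f K ∉ Set.range g := by
      rintro ⟨l, hl⟩
      rcases lt_or_ge l K with h | h
      · have := hlt l h
        have := hf.injective (this.trans hl)
        exact absurd this (ne_of_lt h)
      · have : g K ≤ g l := hg.monotone h
        omega
    refine ⟨f K, Or.inl ⟨⟨K, rfl⟩, hnotg⟩, ?_, ⟨K, rfl⟩⟩
    rintro x (⟨⟨l, rfl⟩, hxg⟩ | ⟨⟨l, rfl⟩, hxf⟩)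
    · rcases lt_or_ge l K with h | h
      · exact absurd (hlt l h ▸ Set.mem_range_self l) hxg
      · exact hf.monotone h
    · rcases lt_or_ge l K with h | h
      · exact absurd ((hlt l h).symm ▸ Set.mem_range_self l) hxf
      · have : g K ≤ g l := hg.monotone h
        omega
  · rintro ⟨m, hmΔ, hmin, K, rfl⟩
    have hnotg : f K ∉ Set.range g := by
      rcases hmΔ with ⟨_, h⟩ | ⟨_, h⟩
      · exact h
      · exact absurd (Set.mem_range_self K) h
    have hagree : ∀ k : ℕ, ∀ l : Fin n, l.val < k → l < K → f l = g l := by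
      intro k
      induction k with
      | zero => intro l hl; omega
      | succ k ih =>
        intro l hlk hlK
        have hfl : f l < f K := hf hlK
        have h1 : f l ∈ Set.range g := by
          by_contra h
          have := hmin (f l) (Or.inl ⟨Set.mem_range_self l, h⟩)
          omega
        obtain ⟨s, hs⟩ := h1
        have hsl : l ≤ s := by
          by_contra h
          push_neg at h
          have heq := ih s (by omega) (h.trans hlK)
          have : f s < f l := hf h
          omega
        have hgl_le : g l ≤ f l := hs ▸ hg.monotone hsl
        have h2 : g l ∈ Set.range f := by
          by_contra h
          have := hmin (g l) (Or.inr ⟨Set.mem_range_self l, h⟩)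
          omega
        obtain ⟨t, ht⟩ := h2
        have htl : l ≤ t := by
          by_contra h
          push_neg at h
          have heq := ih t (by omega) (h.trans hlK)
          have : g t < g l := hg h
          omega
        have : f l ≤ f t := hf.monotone htl
        omega
    have hKlt : f K < g K := by
      by_contra h
      push_neg at h
      have hne : g K ≠ f K := fun he => hnotg ⟨K, he⟩
      have hlt : g K < f K := lt_of_le_of_ne h hne
      have h2 : g K ∈ Set.range f := by
        by_contra h'
        have := hmin (g K) (Or.inr ⟨Set.mem_range_self K, h'⟩)
        omega
      obtain ⟨t, ht⟩ := h2
      rcases lt_or_ge t K with h' | h'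
      · have := hagree n t t.isLt h'
        have : g t < g K := hg h'
        omega
      · have : f K ≤ f t := hf.monotone h'
        omega
    exact ⟨K, fun l hl => hagree n l l.isLt hl, hKlt⟩

lemma sd_insert {A B : Set ℤ} {q : ℤ} (hA : q ∉ A) (hB : q ∉ B) :
    ((A ∪ {q}) \ (B ∪ {q})) ∪ ((B ∪ {q}) \ (A ∪ {q})) = (A \ B) ∪ (B \ A) := by
  ext x
  by_cases hx : x = q <;> simp [hx, hA, hB] <;> tauto

/-- Lemma 2 of the paper: for strictly `μ`-increasing tuples `(i₁,…,i_p)` and `(j₁,…,j_p)` of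
nonzero integers, all distinct from `p+1`, inserting `p+1` into each tuple at its correct
position (i.e. passing to the strictly `μ`-increasing `(p+1)`-tuples whose underlying sets are
the original ones together with `p+1`) preserves and reflects the lexicographic comparison. -/
theorem stmt_2 (p : ℕ) (i j : Fin p → ℤ)
    (hi : MuStrictIncr i) (hj : MuStrictIncr j)
    (hi0 : ∀ a, i a ≠ 0) (hj0 : ∀ a, j a ≠ 0)
    (hip : ∀ a, i a ≠ (p : ℤ) + 1) (hjp : ∀ a, j a ≠ (p : ℤ) + 1)
    (i' j' : Fin (p + 1) → ℤ)
    (hi' : MuStrictIncr i') (hj' : MuStrictIncr j')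
    (hri : Set.range i' = Set.range i ∪ {(p : ℤ) + 1})
    (hrj : Set.range j' = Set.range j ∪ {(p : ℤ) + 1}) :
    MuLexLT i j ↔ MuLexLT i' j' := by
  set q : ℤ := muMap ((p : ℤ) + 1) with hq
  -- transported tuples
  set I : Fin p → ℤ := muMap ∘ i with hI
  set J : Fin p → ℤ := muMap ∘ j with hJ
  set I' : Fin (p + 1) → ℤ := muMap ∘ i' with hI'
  set J' : Fin (p + 1) → ℤ := muMap ∘ j' with hJ'
  have hIm : StrictMono I := fun a b h => hi a b h
  have hJm : StrictMono J := fun a b h => hj a b h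
  have hIm' : StrictMono I' := fun a b h => hi' a b h
  have hJm' : StrictMono J' := fun a b h => hj' a b h
  have hqI : q ∉ Set.range I := by
    rintro ⟨a, ha⟩
    exact hip a (muMap_injective ha)
  have hqJ : q ∉ Set.range J := by
    rintro ⟨a, ha⟩
    exact hjp a (muMap_injective ha)
  have hrI : Set.range I' = Set.range I ∪ {q} := by
    rw [hI', hI, Set.range_comp, Set.range_comp, hri, Set.image_union, Set.image_singleton]
  have hrJ : Set.range J' = Set.range J ∪ {q} := by
    rw [hJ', hJ, Set.range_comp, Set.range_comp, hrj, Set.image_union, Set.image_singleton]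
  -- translate the two lex statements
  have e1 : MuLexLT i j ↔ ZLexLT I J := by
    constructor <;> rintro ⟨K, h1, h2⟩
    · exact ⟨K, fun l hl => congrArg muMap (h1 l hl), h2⟩
    · exact ⟨K, fun l hl => muMap_injective (h1 l hl), h2⟩
  have e2 : MuLexLT i' j' ↔ ZLexLT I' J' := by
    constructor <;> rintro ⟨K, h1, h2⟩
    · exact ⟨K, fun l hl => congrArg muMap (h1 l hl), h2⟩
    · exact ⟨K, fun l hl => muMap_injective (h1 l hl), h2⟩
  rw [e1, e2, zlex_iff_min hIm hJm, zlex_iff_min hIm' hJm']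
  have hsd : sdR I' J' = sdR I J := by
    unfold sdR
    rw [hrI, hrJ]
    exact sd_insert hqI hqJ
  rw [hsd]
  have hqsd : q ∉ sdR I J := by
    rintro (⟨h, _⟩ | ⟨h, _⟩)
    · exact hqI h
    · exact hqJ h
  constructor <;> rintro ⟨m, hmΔ, hmin, hmr⟩
  · refine ⟨m, hmΔ, hmin, ?_⟩
    rw [hrI]
    exact Or.inl hmr
  · refine ⟨m, hmΔ, hmin, ?_⟩
    rw [hrI] at hmr
    rcases hmr with h | h
    · exact h
    · exact absurd (h ▸ hmΔ) hqsd
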